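/- For every real x > 0, 2∑_{k=1}^∞ (4k²x² − 1)·exp(−2k²x²) ≤ 2·exp(−x²)/(1 − exp(−x²)). Equivalently, 1 − F₃(x) ≤ 2e^{−x²}/(1 − e^{−x²}). -/

import Mathlib

lemma lemB (t : ℝ) (ht : 0 ≤ t) : 4*t - 2 ≤ Real.exp t := by
  have h := Real.sum_le_exp_of_nonneg ht 4
  norm_num [Finset.sum_range_succ, Nat.factorial] at h
  nlinarith [mul_nonneg ht (sq_nonneg (t - 1.65)), sq_nonneg (t - 1.65)]

lemma lemA (s : ℝ) (hs : 0 ≤ s) : 4*s - 1 ≤ Real.exp (5*s/4) := by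
  have h5 : (0:ℝ) ≤ 5*s/4 := by linarith
  have h := Real.sum_le_exp_of_nonneg h5 4
  norm_num [Finset.sum_range_succ, Nat.factorial] at h
  nlinarith [mul_nonneg hs (sq_nonneg (s - 1.76)), sq_nonneg (s - 1.76)]

lemma lemC (m t : ℝ) (hm : 2 ≤ m) (ht : 0 < t) :
    4 * m^2 * t - 1 ≤ Real.exp ((2*m^2 - 2*m + 1) * t) := by
  have hs : (0:ℝ) ≤ m^2 * t := by positivity
  have hA := lemA (m^2 * t) hs
  have hq : (0:ℝ) ≤ (3*m-2)*((m-2)*t) :=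
    mul_nonneg (by linarith) (mul_nonneg (by linarith) ht.le)
  have hexp : Real.exp (5*(m^2*t)/4) ≤ Real.exp ((2*m^2 - 2*m + 1) * t) := by
    apply Real.exp_le_exp.2
    nlinarith [hq]
  calc 4 * m^2 * t - 1 = 4*(m^2*t) - 1 := by ring
  _ ≤ Real.exp (5*(m^2*t)/4) := hA
  _ ≤ _ := hexp


/-- `F₃(x) = 1 − 2∑_{n=1}^∞ (4n²x² − 1)exp(−2n²x²)`, the cdf of the maximum of a
Brownian excursion. -/
noncomputable def F₃ (x : ℝ) : ℝ :=
  1 - 2 * ∑' n : ℕ, (4 * ((n : ℝ) + 1) ^ 2 * x ^ 2 - 1) *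
      Real.exp (-(2 * ((n : ℝ) + 1) ^ 2 * x ^ 2))

lemma main_bound (x : ℝ) (hx : 0 < x) :
    2 * ∑' k : ℕ, (4 * ((k : ℝ) + 1) ^ 2 * x ^ 2 - 1) *
        Real.exp (-(2 * ((k : ℝ) + 1) ^ 2 * x ^ 2)) ≤
      2 * Real.exp (-x ^ 2) / (1 - Real.exp (-x ^ 2)) := by
  set t := x ^ 2 with htdef
  have htpos : 0 < t := by positivity
  set r := Real.exp (-t) with hrdef
  have hr0 : 0 < r := Real.exp_pos _
  have hr1 : r < 1 := by
    rw [hrdef, Real.exp_lt_one_iff]; linarith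
  have hr2 : r ^ 2 < 1 := by nlinarith
  set f : ℕ → ℝ := fun k => (4 * ((k : ℝ) + 1) ^ 2 * t - 1) *
      Real.exp (-(2 * ((k : ℝ) + 1) ^ 2 * t)) with hfdef
  set g : ℕ → ℝ := fun n => r ^ (2*n+1) + r ^ (2*n+2) with hgdef
  have hpow : ∀ n : ℕ, r ^ n = Real.exp (-((n : ℝ) * t)) := by
    intro n
    rw [hrdef, ← Real.exp_nat_mul]
    ring_nf
  -- termwise bound
  have hfg : ∀ n : ℕ, f n ≤ g n := by
    intro n
    match n with
    | 0 =>
      have hB := lemB t htpos.le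
      have h1 : (4*t - 2) * r ≤ 1 := by
        have := mul_le_mul_of_nonneg_right hB hr0.le
        rwa [hrdef, ← Real.exp_add, add_neg_cancel, Real.exp_zero] at this
      have h2 : (4*t - 1) * (r*r) ≤ r + r*r := by nlinarith
      have e1 : f 0 = (4*t - 1) * Real.exp (-(2*t)) := by
        simp only [hfdef]; norm_num
      have er : Real.exp (-(2*t)) = r * r := by
        rw [hrdef, ← Real.exp_add]; congr 1; ring
      have e2 : g 0 = r + r*r := by simp only [hgdef]; ring
      rw [e1, er, e2]; exact h2
    | Nat.succ k =>
      have hk0 : (0:ℝ) ≤ (k:ℝ) := Nat.cast_nonneg k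
      set m : ℝ := (k:ℝ) + 2 with hmdef
      have hm2 : (2:ℝ) ≤ m := by linarith
      have key : 4 * m^2 * t - 1 ≤ Real.exp ((2*m^2 - 2*m + 1) * t) :=
        lemC m t hm2 htpos
      have hfk : f (k+1) = (4 * m^2 * t - 1) * Real.exp (-(2 * m^2 * t)) := by
        simp only [hfdef, hmdef]
        push_cast
        ring_nf
      have h3 : f (k+1) ≤ Real.exp ((2*m^2 - 2*m + 1) * t) * Real.exp (-(2 * m^2 * t)) := by
        rw [hfk]
        exact mul_le_mul_of_nonneg_right key (Real.exp_pos _).le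
      have h4 : Real.exp ((2*m^2 - 2*m + 1) * t) * Real.exp (-(2 * m^2 * t)) = r ^ (2*(k+1)+1) := by
        rw [hpow, ← Real.exp_add]
        congr 1
        rw [hmdef]
        push_cast
        ring
      have h5 : (0:ℝ) ≤ r ^ (2*(k+1)+2) := by positivity
      calc f (k+1) ≤ r ^ (2*(k+1)+1) := h4 ▸ h3
      _ ≤ g (k+1) := by simp only [hgdef]; linarith
  -- summability of f
  have hsum5 : Summable (fun n : ℕ => 5 * r ^ (n+1)) := by
    have : Summable (fun n : ℕ => (5*r) * r ^ n) :=
      (summable_geometric_of_lt_one hr0.le hr1).mul_left _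
    convert this using 2 with n
    ring
  have hf_sum : Summable f := by
    apply Summable.of_norm_bounded hsum5
    intro n
    have hm1 : (1:ℝ) ≤ (n : ℝ) + 1 := by linarith [Nat.cast_nonneg (α := ℝ) n]
    set m : ℝ := (n : ℝ) + 1 with hmdef
    have hs : (0:ℝ) ≤ m^2 * t := by positivity
    have habs : |4 * m ^ 2 * t - 1| ≤ 5 * Real.exp (m^2 * t) := by
      have := Real.add_one_le_exp (m^2*t)
      rw [abs_le]; constructor <;> nlinarith
    have hnrm : ‖f n‖ = |4 * m ^ 2 * t - 1| * Real.exp (-(2 * m ^ 2 * t)) := by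
      simp only [hfdef, hmdef, Real.norm_eq_abs, abs_mul, abs_of_pos (Real.exp_pos _)]
    rw [hnrm]
    calc |4 * m ^ 2 * t - 1| * Real.exp (-(2 * m ^ 2 * t))
        ≤ 5 * Real.exp (m^2 * t) * Real.exp (-(2 * m ^ 2 * t)) :=
          mul_le_mul_of_nonneg_right habs (Real.exp_pos _).le
      _ = 5 * Real.exp (-(m^2 * t)) := by rw [mul_assoc, ← Real.exp_add]; ring_nf
      _ ≤ 5 * Real.exp (-(m * t)) := by
          have h := Real.exp_le_exp.2 (show -(m^2*t) ≤ -(m*t) by nlinarith)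
          linarith
      _ = 5 * r ^ (n+1) := by rw [hpow, hmdef]; push_cast; ring_nf
  -- sum of g
  have hgeo : Summable (fun n : ℕ => (r^2) ^ n) :=
    summable_geometric_of_lt_one (by positivity) hr2
  have hg_eq : ∀ n : ℕ, g n = (r + r^2) * (r^2) ^ n := by
    intro n
    simp only [hgdef]
    rw [← pow_mul]
    ring
  have hg_sum : Summable g := by
    rw [funext hg_eq]; exact hgeo.mul_left _
  have h1r : (1:ℝ) - r ≠ 0 := ne_of_gt (by linarith)
  have h1r2 : (1:ℝ) - r^2 ≠ 0 := ne_of_gt (by linarith)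
  have htsum_g : ∑' n, g n = r / (1 - r) := by
    rw [tsum_congr hg_eq, tsum_mul_left, tsum_geometric_of_lt_one (by positivity) hr2]
    field_simp
    ring
  have hmain : ∑' n, f n ≤ r / (1 - r) := htsum_g ▸ Summable.tsum_le_tsum hfg hf_sum hg_sum
  calc 2 * ∑' n, f n ≤ 2 * (r / (1-r)) := by linarith
    _ = 2 * r / (1 - r) := by ring

/-- For every real `x > 0`,
`2∑_{k=1}^∞ (4k²x² − 1)·exp(−2k²x²) ≤ 2·exp(−x²)/(1 − exp(−x²))`;
equivalently `1 − F₃(x) ≤ 2e^{−x²}/(1 − e^{−x²})`. -/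
theorem stmt_7 (x : ℝ) (hx : 0 < x) :
    2 * ∑' k : ℕ, (4 * ((k : ℝ) + 1) ^ 2 * x ^ 2 - 1) *
        Real.exp (-(2 * ((k : ℝ) + 1) ^ 2 * x ^ 2)) ≤
      2 * Real.exp (-x ^ 2) / (1 - Real.exp (-x ^ 2)) ∧
    1 - F₃ x ≤ 2 * Real.exp (-x ^ 2) / (1 - Real.exp (-x ^ 2)) := by
  have h := main_bound x hx
  refine ⟨h, ?_⟩
  unfold F₃
  linarith
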